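/- For every natural number k ≥ 2, consider the 2×2 real matrix H = 2^k · [[3/4, 1], [1, 1]]. Then: (a) the rank over the field 𝔽₂ = ZMod 2 of the 2k × 2k block matrix [[I_k, I_k], [I_k, I_k]] (each block the k×k identity over 𝔽₂) equals k; and (b) (1/2)·log₂ det(I₂ + H Hᵀ) ≥ 2k − 2. Consequently the gap between the real Gaussian MIMO capacity lower bound (1/2)·log₂ det(I₂ + H Hᵀ) and the capacity k of the corresponding linear finite-field deterministic MIMO channel is at least k − 2, which is unbounded in k. -/

import Mathlib

open Matrix

/-- The MIMO example showing the linear finite-field deterministic model does not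
approximate the Gaussian model within a constant gap: for `k ≥ 2` and
`H = 2^k • [[3/4, 1], [1, 1]]`, the 𝔽₂-rank of `[[I_k, I_k], [I_k, I_k]]`
(the deterministic MIMO capacity) equals `k`, while the real Gaussian MIMO
capacity lower bound `(1/2)·log₂ det(I₂ + H Hᵀ)` is at least `2k - 2`. -/
theorem mimo_unbounded_gap (k : ℕ) (hk : 2 ≤ k) :
    (Matrix.fromBlocks (1 : Matrix (Fin k) (Fin k) (ZMod 2))
        (1 : Matrix (Fin k) (Fin k) (ZMod 2))
        (1 : Matrix (Fin k) (Fin k) (ZMod 2))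
        (1 : Matrix (Fin k) (Fin k) (ZMod 2))).rank = k ∧
    (2 * (k : ℝ) - 2) ≤ (1 / 2) *
      Real.logb 2
        ((1 + ((2 : ℝ) ^ k • !![(3 : ℝ)/4, 1; 1, 1]) *
              ((2 : ℝ) ^ k • !![(3 : ℝ)/4, 1; 1, 1])ᵀ).det) := by
  constructor
  · set M : Matrix (Fin k ⊕ Fin k) (Fin k ⊕ Fin k) (ZMod 2) :=
      Matrix.fromBlocks 1 1 1 1 with hMdef
    have hM : M = Matrix.fromRows (1 : Matrix (Fin k) (Fin k) (ZMod 2)) (1 : Matrix (Fin k) (Fin k) (ZMod 2)) *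
        Matrix.fromCols (1 : Matrix (Fin k) (Fin k) (ZMod 2)) (1 : Matrix (Fin k) (Fin k) (ZMod 2)) := by
      rw [Matrix.fromRows_mul_fromCols]; simp [hMdef]
    have hup : M.rank ≤ k := by
      calc M.rank ≤ (Matrix.fromRows (1 : Matrix (Fin k) (Fin k) (ZMod 2)) 1).rank := by
            rw [hM]; exact Matrix.rank_mul_le_left _ _
        _ ≤ Fintype.card (Fin k) := Matrix.rank_le_card_width _
        _ = k := Fintype.card_fin k
    have hMR : M * Matrix.fromRows (1 : Matrix (Fin k) (Fin k) (ZMod 2)) (0 : Matrix (Fin k) (Fin k) (ZMod 2)) =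
        Matrix.fromRows (1 : Matrix (Fin k) (Fin k) (ZMod 2)) (1 : Matrix (Fin k) (Fin k) (ZMod 2)) := by
      rw [hMdef, Matrix.fromBlocks_mul_fromRows]; simp
    have hone : (1 : Matrix (Fin k) (Fin k) (ZMod 2)) =
        Matrix.fromCols (1 : Matrix (Fin k) (Fin k) (ZMod 2)) (0 : Matrix (Fin k) (Fin k) (ZMod 2)) *
          (M * Matrix.fromRows (1 : Matrix (Fin k) (Fin k) (ZMod 2)) (0 : Matrix (Fin k) (Fin k) (ZMod 2))) := by
      rw [hMR, Matrix.fromCols_mul_fromRows]; simp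
    have hlow : k ≤ M.rank := by
      calc k = (1 : Matrix (Fin k) (Fin k) (ZMod 2)).rank := by
            rw [Matrix.rank_one, Fintype.card_fin]
        _ ≤ (M * Matrix.fromRows (1 : Matrix (Fin k) (Fin k) (ZMod 2)) (0 : Matrix (Fin k) (Fin k) (ZMod 2))).rank := by
            conv_lhs => rw [hone]
            exact Matrix.rank_mul_le_right _ _
        _ ≤ M.rank := Matrix.rank_mul_le_left _ _
    exact le_antisymm hup hlow
  · set t : ℝ := (2 : ℝ) ^ k with ht
    have ht1 : (16 : ℝ) ≤ t ^ 2 := by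
      rw [ht, ← pow_mul]
      calc (16 : ℝ) = 2 ^ 4 := by norm_num
        _ ≤ 2 ^ (k * 2) := by
            apply pow_le_pow_right₀ (by norm_num)
            omega
    have hdet : ((1 + ((2 : ℝ) ^ k • !![(3 : ℝ)/4, 1; 1, 1]) *
              ((2 : ℝ) ^ k • !![(3 : ℝ)/4, 1; 1, 1])ᵀ).det) =
        1 + 57 / 16 * t ^ 2 + 1 / 16 * t ^ 4 := by
      simp [Matrix.det_fin_two, Matrix.mul_apply, Fin.sum_univ_two, Matrix.one_apply,
        Matrix.vecHead, Matrix.vecTail, ht, Matrix.vecMul, dotProduct]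
      ring
    have hpos : (0 : ℝ) < t ^ 2 := by positivity
    have hkey : (2 : ℝ) ^ ((4 * (k : ℝ)) - 4) ≤
        1 + 57 / 16 * t ^ 2 + 1 / 16 * t ^ 4 := by
      have : (2 : ℝ) ^ ((4 * (k : ℝ)) - 4) = t ^ 4 / 16 := by
        rw [Real.rpow_sub (by norm_num)]
        have : (2 : ℝ) ^ (4 * (k : ℝ)) = t ^ 4 := by
          rw [ht, ← Real.rpow_natCast (2 : ℝ) k, ← Real.rpow_natCast _ 4,
            ← Real.rpow_mul (by norm_num), mul_comm]
          norm_num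
        rw [this]
        norm_num [Real.rpow_natCast]
      rw [this]
      nlinarith
    have hlogb : (4 * (k : ℝ)) - 4 ≤
        Real.logb 2 (1 + 57 / 16 * t ^ 2 + 1 / 16 * t ^ 4) := by
      calc (4 * (k : ℝ)) - 4 = Real.logb 2 ((2 : ℝ) ^ ((4 * (k : ℝ)) - 4)) := by
            rw [Real.logb_rpow (by norm_num) (by norm_num)]
        _ ≤ _ := by
            exact Real.logb_le_logb_of_le (by norm_num) (by positivity) hkey
    rw [hdet]
    linarith
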